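/- Let M be an R-bimodule over an associative ring R. If M is s-unital (for every m ∈ M there exist r, s ∈ R with r·m = m and m·s = m), then for every finite list m₁,…,mₙ ∈ M there exists a single element e ∈ R with e·mᵢ = mᵢ·e = mᵢ for all i. -/
import Mathlib


/-- If an `R`-bimodule `M` over a non-unital ring `R` is s-unital, then for any
finite list of elements there is a single common two-sided unit. -/
theorem stmt3 {R M : Type*} [NonUnitalRing R] [AddCommGroup M]
    (l : R → M → M) (ρ : M → R → M)
    (hl_add_r : ∀ r s : R, ∀ m : M, l (r + s) m = l r m + l s m)
    (hl_add_m : ∀ r : R, ∀ m n : M, l r (m + n) = l r m + l r n)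
    (hl_mul : ∀ r s : R, ∀ m : M, l (r * s) m = l r (l s m))
    (hρ_add_r : ∀ m : M, ∀ r s : R, ρ m (r + s) = ρ m r + ρ m s)
    (hρ_add_m : ∀ m n : M, ∀ r : R, ρ (m + n) r = ρ m r + ρ n r)
    (hρ_mul : ∀ m : M, ∀ r s : R, ρ m (r * s) = ρ (ρ m r) s)
    (hcomp : ∀ r : R, ∀ m : M, ∀ s : R, ρ (l r m) s = l r (ρ m s))
    (hsu : ∀ m : M, ∃ r s : R, l r m = m ∧ ρ m s = m) :
    ∀ L : List M, ∃ e : R, ∀ m ∈ L, l e m = m ∧ ρ m e = m := by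
  -- subtraction laws
  have hl_sub_r : ∀ r s : R, ∀ m : M, l (r - s) m = l r m - l s m := by
    intro r s m
    have h := hl_add_r (r - s) s m
    rw [sub_add_cancel] at h
    exact eq_sub_of_add_eq h.symm
  have hl_sub_m : ∀ r : R, ∀ m n : M, l r (m - n) = l r m - l r n := by
    intro r m n
    have h := hl_add_m r (m - n) n
    rw [sub_add_cancel] at h
    exact eq_sub_of_add_eq h.symm
  have hρ_sub_r : ∀ m : M, ∀ r s : R, ρ m (r - s) = ρ m r - ρ m s := by
    intro m r s
    have h := hρ_add_r m (r - s) s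
    rw [sub_add_cancel] at h
    exact eq_sub_of_add_eq h.symm
  have hρ_sub_m : ∀ m n : M, ∀ r : R, ρ (m - n) r = ρ m r - ρ n r := by
    intro m n r
    have h := hρ_add_m (m - n) n r
    rw [sub_add_cancel] at h
    exact eq_sub_of_add_eq h.symm
  have hl0 : ∀ m : M, l 0 m = 0 := by
    intro m
    have h := hl_sub_r 0 0 m
    simpa using h
  have hρ0 : ∀ m : M, ρ m 0 = 0 := by
    intro m
    have h := hρ_sub_r m 0 0
    simpa using h
  -- common left units
  have left : ∀ L : List M, ∃ u : R, ∀ m ∈ L, l u m = m := by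
    intro L
    induction L with
    | nil => exact ⟨0, by simp⟩
    | cons a L ih =>
      obtain ⟨u, hu⟩ := ih
      obtain ⟨r, s, hr, -⟩ := hsu (a - l u a)
      refine ⟨u + r - r * u, ?_⟩
      intro m hm
      have key : ∀ x : M, l u x = x → l (u + r - r * u) x = x := by
        intro x hx
        rw [hl_sub_r, hl_add_r, hl_mul, hx]
        abel
      rcases List.mem_cons.mp hm with h | h
      · subst h
        rw [hl_sub_r, hl_add_r, hl_mul]
        have h1 : l r m - l r (l u m) = m - l u m := by
          rw [← hl_sub_m, hr]
        have h2 : l r m = m - l u m + l r (l u m) := by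
          rw [← h1]; abel
        rw [h2]; abel
      · exact key m (hu m h)
  -- common right units
  have right : ∀ L : List M, ∃ v : R, ∀ m ∈ L, ρ m v = m := by
    intro L
    induction L with
    | nil => exact ⟨0, by simp⟩
    | cons a L ih =>
      obtain ⟨v, hv⟩ := ih
      obtain ⟨r, s, -, hs⟩ := hsu (a - ρ a v)
      refine ⟨v + s - v * s, ?_⟩
      intro m hm
      rcases List.mem_cons.mp hm with h | h
      · subst h
        rw [hρ_sub_r, hρ_add_r, hρ_mul]
        have h1 : ρ m s - ρ (ρ m v) s = m - ρ m v := by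
          rw [← hρ_sub_m, hs]
        have h2 : ρ m s = m - ρ m v + ρ (ρ m v) s := by
          rw [← h1]; abel
        rw [h2]; abel
      · have hx := hv m h
        rw [hρ_sub_r, hρ_add_r, hρ_mul, hx]
        abel
  -- combine
  intro L
  obtain ⟨u, hu⟩ := left L
  obtain ⟨v, hv⟩ := right L
  refine ⟨u + v - v * u, fun m hm => ⟨?_, ?_⟩⟩
  · rw [hl_sub_r, hl_add_r, hl_mul, hu m hm]
    abel
  · rw [hρ_sub_r, hρ_add_r, hρ_mul, hv m hm]
    abel
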